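/- Let A ∈ ℝ^{n×n}, Å ∈ ℝ^{n̂×n̂} have no common eigenvalues, B ∈ ℝ^n, Ĉ ∈ ℝ^{1×n̂}, B̂ ∈ ℝ^{n̂}, D̂ ∈ ℝ, and let K be the unique solution of the Sylvester equation A·K - K·Å + B·Ĉ = 0. Suppose (A,B) is controllable and for every eigenvalue λ of A, the scalar Ĝ(λ) := D̂ + Ĉ(λI - Å)^{-1}B̂ is nonzero. Then the pair (A, B·D̂ - K·B̂) is controllable. -/

import Mathlib

open scoped Matrix

/-- Kalman controllability matrix `[b, Ab, …, A^{n-1}b]`. -/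
def ctrbMat {n : ℕ} (A : Matrix (Fin n) (Fin n) ℝ) (b : Fin n → ℝ) :
    Matrix (Fin n) (Fin n) ℝ :=
  Matrix.of fun i j => ((A ^ (j : ℕ)) *ᵥ b) i

section Aux

open Matrix Polynomial

/-- Complex Kalman controllability matrix. -/
private noncomputable def ctrbMatC {n : ℕ} (M : Matrix (Fin n) (Fin n) ℂ) (b : Fin n → ℂ) :
    Matrix (Fin n) (Fin n) ℂ :=
  Matrix.of fun i j => ((M ^ (j : ℕ)) *ᵥ b) i

private lemma ctrbMat_map {n : ℕ} (A : Matrix (Fin n) (Fin n) ℝ) (b : Fin n → ℝ) :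
    (ctrbMat A b).map (algebraMap ℝ ℂ) =
      ctrbMatC (A.map (algebraMap ℝ ℂ)) (fun i => algebraMap ℝ ℂ (b i)) := by
  have hpow : ∀ k : ℕ, (A ^ k).map (algebraMap ℝ ℂ) = (A.map (algebraMap ℝ ℂ)) ^ k := by
    intro k
    have := map_pow ((algebraMap ℝ ℂ).mapMatrix) A k
    simpa [RingHom.mapMatrix_apply] using this
  ext i j
  simp only [ctrbMat, ctrbMatC, Matrix.map_apply, Matrix.of_apply, ← hpow,
    Matrix.mulVec, dotProduct, map_sum, _root_.map_mul]

private lemma dot_sum_smul_pow {n : ℕ} (M : Matrix (Fin n) (Fin n) ℂ)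
    (b x : Fin n → ℂ) (s : Finset ℕ) (c : ℕ → ℂ) :
    x ⬝ᵥ ((∑ i ∈ s, c i • M ^ i) *ᵥ b) = ∑ i ∈ s, c i * (x ⬝ᵥ (M ^ i *ᵥ b)) := by
  classical
  induction s using Finset.induction with
  | empty => simp [Matrix.zero_mulVec]
  | insert _ _ h ih =>
    rw [Finset.sum_insert h, Finset.sum_insert h, Matrix.add_mulVec, dotProduct_add,
      Matrix.smul_mulVec, dotProduct_smul, ih, smul_eq_mul]

private lemma vecMul_smul_one {m : ℕ} (μ : ℂ) (y : Fin m → ℂ) :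
    y ᵥ* (μ • (1 : Matrix (Fin m) (Fin m) ℂ)) = μ • y := by
  ext j
  simp [Matrix.vecMul, dotProduct, Matrix.smul_apply, Matrix.one_apply,
    mul_ite, mul_comm]

private lemma ctrb_transpose_mulVec {n : ℕ} (M : Matrix (Fin n) (Fin n) ℂ)
    (b x : Fin n → ℂ) (j : Fin n) :
    ((ctrbMatC M b)ᵀ *ᵥ x) j = x ⬝ᵥ (M ^ (j : ℕ) *ᵥ b) := by
  simp only [Matrix.mulVec, dotProduct, Matrix.transpose_apply, ctrbMatC,
    Matrix.of_apply]
  exact Finset.sum_congr rfl fun i _ => mul_comm _ _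

/-- Kalman rank condition implies the PBH (left eigenvector) test. -/
private lemma pbh_of_kalman {n : ℕ} {M : Matrix (Fin n) (Fin n) ℂ} {b : Fin n → ℂ}
    (hdet : (ctrbMatC M b).det ≠ 0) :
    ∀ (μ : ℂ) (x : Fin n → ℂ), x ≠ 0 → x ᵥ* M = μ • x → x ⬝ᵥ b ≠ 0 := by
  intro μ x hx hxe hdot
  have key : ∀ j : ℕ, x ⬝ᵥ (M ^ j *ᵥ b) = 0 := by
    intro j
    induction j with
    | zero => simpa [Matrix.one_mulVec] using hdot
    | succ j ih =>
      have hstep : x ⬝ᵥ (M ^ (j + 1) *ᵥ b) = (x ᵥ* M) ⬝ᵥ (M ^ j *ᵥ b) := by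
        rw [Matrix.dotProduct_mulVec, Matrix.dotProduct_mulVec, Matrix.vecMul_vecMul,
          ← pow_succ']
      rw [hstep, hxe, smul_dotProduct, ih, smul_zero]
  apply hdet
  rw [← Matrix.det_transpose]
  rw [← Matrix.exists_mulVec_eq_zero_iff]
  refine ⟨x, hx, ?_⟩
  ext j
  rw [ctrb_transpose_mulVec, key]; rfl

/-- PBH (left eigenvector) test implies the Kalman rank condition. -/
private lemma kalman_of_pbh {n : ℕ} {M : Matrix (Fin n) (Fin n) ℂ} {b : Fin n → ℂ}
    (h : ∀ (μ : ℂ) (x : Fin n → ℂ), x ≠ 0 → x ᵥ* M = μ • x → x ⬝ᵥ b ≠ 0) :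
    (ctrbMatC M b).det ≠ 0 := by
  classical
  rcases Nat.eq_zero_or_pos n with hn | hn
  · subst hn
    simp [Matrix.det_fin_zero]
  intro hdet
  -- a nonzero kernel vector of the transpose
  have hdet' : ((ctrbMatC M b)ᵀ).det = 0 := by rw [Matrix.det_transpose]; exact hdet
  obtain ⟨v, hv0, hv⟩ := (Matrix.exists_mulVec_eq_zero_iff).2 hdet'
  set U : Submodule ℂ (Fin n → ℂ) := LinearMap.ker ((ctrbMatC M b)ᵀ).mulVecLin with hU
  have memU : ∀ x : Fin n → ℂ, x ∈ U ↔ ∀ j : Fin n, x ⬝ᵥ (M ^ (j : ℕ) *ᵥ b) = 0 := by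
    intro x
    constructor
    · intro hxU j
      have h1 : ((ctrbMatC M b)ᵀ *ᵥ x) j = 0 := by
        have h2 : (ctrbMatC M b)ᵀ *ᵥ x = 0 := hxU
        rw [h2]; rfl
      rwa [ctrb_transpose_mulVec] at h1
    · intro hx
      show (ctrbMatC M b)ᵀ *ᵥ x = 0
      ext j
      rw [ctrb_transpose_mulVec, hx]; rfl
  -- Cayley–Hamilton: the n-th power also pairs to zero
  have hCH : ∀ x ∈ U, x ⬝ᵥ (M ^ n *ᵥ b) = 0 := by
    intro x hx
    have hdeg : M.charpoly.natDegree = n := by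
      simpa using Matrix.charpoly_natDegree_eq_dim M
    have h0 : (0 : Matrix (Fin n) (Fin n) ℂ) =
        ∑ i ∈ Finset.range (n + 1), M.charpoly.coeff i • M ^ i := by
      have h0' := Polynomial.aeval_eq_sum_range (p := M.charpoly) M
      rw [Matrix.aeval_self_charpoly, hdeg] at h0'
      exact h0'
    rw [Finset.sum_range_succ] at h0
    have hcn : M.charpoly.coeff n = 1 := by
      have := (Matrix.charpoly_monic M).coeff_natDegree
      rwa [hdeg] at this
    rw [hcn, one_smul] at h0
    have hMn : M ^ n = -∑ i ∈ Finset.range n, M.charpoly.coeff i • M ^ i := by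
      linear_combination (norm := module) -h0
    rw [hMn, Matrix.neg_mulVec, dotProduct_neg, dot_sum_smul_pow]
    have : ∀ i ∈ Finset.range n, M.charpoly.coeff i * (x ⬝ᵥ (M ^ i *ᵥ b)) = 0 := by
      intro i hi
      rw [(memU x).1 hx ⟨i, Finset.mem_range.1 hi⟩, mul_zero]
    rw [Finset.sum_congr rfl this, Finset.sum_const_zero, neg_zero]
  -- U is invariant under right multiplication by M
  have hinv : ∀ x ∈ U, M.vecMulLinear x ∈ U := by
    intro x hx
    rw [memU]
    intro j
    have hstep : (x ᵥ* M) ⬝ᵥ (M ^ (j : ℕ) *ᵥ b) = x ⬝ᵥ (M ^ ((j : ℕ) + 1) *ᵥ b) := by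
      rw [Matrix.dotProduct_mulVec, Matrix.dotProduct_mulVec, Matrix.vecMul_vecMul, ← pow_succ']
    show (x ᵥ* M) ⬝ᵥ (M ^ (j : ℕ) *ᵥ b) = 0
    rw [hstep]
    by_cases hlt : (j : ℕ) + 1 < n
    · exact (memU x).1 hx ⟨(j : ℕ) + 1, hlt⟩
    · have heq : (j : ℕ) + 1 = n := by omega
      rw [heq]; exact hCH x hx
  -- restrict to U and find an eigenvector
  have hvU : v ∈ U := hv
  have : Nontrivial U := by
    refine ⟨⟨v, hvU⟩, 0, ?_⟩
    intro hcontra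
    exact hv0 (by simpa [Subtype.ext_iff] using hcontra)
  set f : U →ₗ[ℂ] U := (M.vecMulLinear).restrict hinv with hf
  obtain ⟨μ, hμ⟩ := Module.End.exists_eigenvalue f
  obtain ⟨w, hw⟩ := hμ.exists_hasEigenvector
  have hx0 : (w : Fin n → ℂ) ≠ 0 := by
    intro hcontra
    exact hw.2 (Subtype.ext hcontra)
  have hxe : (w : Fin n → ℂ) ᵥ* M = μ • (w : Fin n → ℂ) := by
    have h2 := congrArg (Subtype.val) hw.apply_eq_smul
    simpa only [hf, LinearMap.restrict_apply, Matrix.vecMulLinear_apply,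
      Submodule.coe_smul, SetLike.val_smul] using h2
  have hb : (w : Fin n → ℂ) ⬝ᵥ b = 0 := by
    have := (memU _).1 w.2 ⟨0, hn⟩
    simpa [Matrix.one_mulVec] using this
  exact h μ w hx0 hxe hb

end Aux

theorem controllability_preserved
    (n nh : ℕ)
    (A : Matrix (Fin n) (Fin n) ℝ) (Ah : Matrix (Fin nh) (Fin nh) ℝ)
    (B : Matrix (Fin n) (Fin 1) ℝ) (Bh : Matrix (Fin nh) (Fin 1) ℝ)
    (Ch : Matrix (Fin 1) (Fin nh) ℝ) (Dh : ℝ)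
    (K : Matrix (Fin n) (Fin nh) ℝ)
    (hspec : spectrum ℂ (A.map (algebraMap ℝ ℂ)) ∩
      spectrum ℂ (Ah.map (algebraMap ℝ ℂ)) = ∅)
    (hK : A * K - K * Ah + B * Ch = 0)
    (hctrb : (ctrbMat A (fun i => B i 0)).det ≠ 0)
    (hG : ∀ μ ∈ spectrum ℂ (A.map (algebraMap ℝ ℂ)),
      algebraMap ℝ ℂ Dh +
        ((Ch.map (algebraMap ℝ ℂ)) *
          (μ • (1 : Matrix (Fin nh) (Fin nh) ℂ) - Ah.map (algebraMap ℝ ℂ))⁻¹ *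
          (Bh.map (algebraMap ℝ ℂ))) 0 0 ≠ 0) :
    (ctrbMat A (fun i => (Dh • B - K * Bh) i 0)).det ≠ 0 := by
  classical
  open Matrix in
  set f := algebraMap ℝ ℂ with hfdef
  set Ac := A.map f
  set Ahc := Ah.map f
  set Bc := B.map f
  set Bhc := Bh.map f
  set Chc := Ch.map f
  set Kc := K.map f
  -- transfer the real Kalman conditions to ℂ
  have hdetC : (ctrbMatC Ac (fun i => Bc i 0)).det ≠ 0 := by
    have := (RingHom.map_det f (ctrbMat A (fun i => B i 0)))
    rw [RingHom.mapMatrix_apply] at this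
    rw [ctrbMat_map] at this
    intro hcontra
    apply hctrb
    have : f ((ctrbMat A fun i => B i 0).det) = 0 := by
      rw [this]
      exact hcontra
    exact (map_eq_zero_iff f f.injective).1 this
  -- PBH test for (A, B)
  have hpbh := pbh_of_kalman hdetC
  -- complexified Sylvester equation
  have hKc : Ac * Kc - Kc * Ahc + Bc * Chc = 0 := by
    have h1 : ((A * K - K * Ah + B * Ch).map f) = (0 : Matrix (Fin n) (Fin nh) ℝ).map f := by
      rw [hK]
    ext i j
    have := congrFun (congrFun h1 i) j
    simpa [Matrix.map_apply, Matrix.sub_apply, Matrix.add_apply, Matrix.mul_apply,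
      map_sum, _root_.map_mul, map_sub, map_add, Ac, Ahc, Bc, Chc, Kc] using this
  -- main PBH verification for the new input vector
  have hC : (ctrbMatC Ac (fun i => f ((Dh • B - K * Bh) i 0))).det ≠ 0 := by
    apply kalman_of_pbh
    intro μ x hx hxe
    -- μ is in the spectrum of Ac
    have hμA : μ ∈ spectrum ℂ Ac := by
      rw [spectrum.mem_iff]
      intro hunit
      have halg : algebraMap ℂ (Matrix (Fin n) (Fin n) ℂ) μ = μ • 1 := by
        rw [Matrix.algebraMap_eq_diagonal]
        ext i j; by_cases h : i = j <;> simp [Matrix.diagonal, Matrix.one_apply, h]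
      rw [halg] at hunit
      set N := μ • (1 : Matrix (Fin n) (Fin n) ℂ) - Ac with hN
      have hxN : x ᵥ* N = 0 := by
        rw [hN, Matrix.vecMul_sub, hxe]
        ext j
        simp [Matrix.vecMul, dotProduct, Matrix.one_apply, mul_comm]
      have hNinv : N * N⁻¹ = 1 := Matrix.mul_nonsing_inv N ((Matrix.isUnit_iff_isUnit_det N).1 hunit)
      apply hx
      calc x = x ᵥ* (1 : Matrix (Fin n) (Fin n) ℂ) := by rw [Matrix.vecMul_one]
        _ = x ᵥ* (N * N⁻¹) := by rw [hNinv]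
        _ = (x ᵥ* N) ᵥ* N⁻¹ := (Matrix.vecMul_vecMul x N N⁻¹).symm
        _ = 0 := by rw [hxN, Matrix.zero_vecMul]
    have hμAh : μ ∉ spectrum ℂ Ahc := by
      intro hcontra
      have : μ ∈ spectrum ℂ Ac ∩ spectrum ℂ Ahc := ⟨hμA, hcontra⟩
      rw [hspec] at this
      exact this
    have hunitAh : IsUnit (μ • (1 : Matrix (Fin nh) (Fin nh) ℂ) - Ahc) := by
      have := spectrum.notMem_iff.1 hμAh
      have halg : algebraMap ℂ (Matrix (Fin nh) (Fin nh) ℂ) μ = μ • 1 := by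
        rw [Matrix.algebraMap_eq_diagonal]
        ext i j; by_cases h : i = j <;> simp [Matrix.diagonal, Matrix.one_apply, h]
      rwa [halg] at this
    set N := μ • (1 : Matrix (Fin nh) (Fin nh) ℂ) - Ahc with hN
    have hNinv : N * N⁻¹ = 1 := Matrix.mul_nonsing_inv N ((Matrix.isUnit_iff_isUnit_det N).1 hunitAh)
    -- β = x ⬝ᵥ (column of B)
    set β := x ⬝ᵥ (fun i => Bc i 0) with hβ
    have hβne : β ≠ 0 := hpbh μ x hx hxe
    -- y = x ᵥ* Kc satisfies y ᵥ* N = -β • (row of Ch)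
    set y := x ᵥ* Kc with hy
    set c : Fin nh → ℂ := fun j => Chc 0 j with hc
    have hrow : x ᵥ* (Bc * Chc) = β • c := by
      rw [← Matrix.vecMul_vecMul]
      ext j
      simp [Matrix.vecMul, dotProduct, hβ, hc, Fin.sum_univ_one, smul_eq_mul, mul_comm]
    have hyN : y ᵥ* N = -β • c := by
      have h1 : x ᵥ* (Ac * Kc) - x ᵥ* (Kc * Ahc) + x ᵥ* (Bc * Chc) = 0 := by
        rw [← Matrix.vecMul_sub, ← Matrix.vecMul_add, hKc, Matrix.vecMul_zero]
      rw [← Matrix.vecMul_vecMul, hxe, hrow] at h1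
      rw [hN, Matrix.vecMul_sub, vecMul_smul_one]
      rw [Matrix.smul_vecMul, ← Matrix.vecMul_vecMul, ← hy] at h1
      have h2 : μ • y - y ᵥ* Ahc = -(β • c) := by
        linear_combination (norm := module) h1
      rw [h2, neg_smul]
    have hyval : y = (-β) • (c ᵥ* N⁻¹) := by
      calc y = y ᵥ* (1 : Matrix (Fin nh) (Fin nh) ℂ) := by rw [Matrix.vecMul_one]
        _ = y ᵥ* (N * N⁻¹) := by rw [hNinv]
        _ = (y ᵥ* N) ᵥ* N⁻¹ := (Matrix.vecMul_vecMul y N N⁻¹).symm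
        _ = (-β • c) ᵥ* N⁻¹ := by rw [hyN]
        _ = (-β) • (c ᵥ* N⁻¹) := by rw [Matrix.smul_vecMul]
    -- the transfer function value
    set G := f Dh + (Chc * N⁻¹ * Bhc) 0 0 with hGdef
    have hGne : G ≠ 0 := hG μ hμA
    -- final computation
    have hxb' : x ⬝ᵥ (fun i => f ((Dh • B - K * Bh) i 0)) = β * G := by
      have hdot1 : x ⬝ᵥ (fun i => f ((Dh • B) i 0)) = f Dh * β := by
        simp only [Matrix.smul_apply, smul_eq_mul, _root_.map_mul, hβ,
          dotProduct, Matrix.map_apply, Bc]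
        rw [Finset.mul_sum]
        exact Finset.sum_congr rfl fun i _ => by ring
      have hdot2 : x ⬝ᵥ (fun i => f ((K * Bh) i 0)) = y ⬝ᵥ (fun j => Bhc j 0) := by
        have hKBh : ∀ i, f ((K * Bh) i 0) = (Kc * Bhc) i 0 := by
          intro i
          simp [Matrix.mul_apply, map_sum, _root_.map_mul, Matrix.map_apply, Kc, Bhc]
        simp only [hKBh]
        have : x ⬝ᵥ (fun i => (Kc * Bhc) i 0) = (x ᵥ* (Kc * Bhc)) 0 := by
          simp [Matrix.vecMul, dotProduct]
        rw [this, ← Matrix.vecMul_vecMul, ← hy]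
        simp [Matrix.vecMul, dotProduct]
      have hsplit : x ⬝ᵥ (fun i => f ((Dh • B - K * Bh) i 0)) =
          x ⬝ᵥ (fun i => f ((Dh • B) i 0)) - x ⬝ᵥ (fun i => f ((K * Bh) i 0)) := by
        simp only [Matrix.sub_apply, map_sub, dotProduct, mul_sub, Finset.sum_sub_distrib]
      rw [hsplit, hdot1, hdot2, hyval]
      have hCB : (c ᵥ* N⁻¹) ⬝ᵥ (fun j => Bhc j 0) = (Chc * N⁻¹ * Bhc) 0 0 := by
        simp [Matrix.mul_apply, Matrix.vecMul, dotProduct, hc, Finset.sum_mul]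
      rw [smul_dotProduct, hCB, hGdef]
      ring_nf
    rw [hxb', hGdef]
    exact mul_ne_zero hβne hGne
  -- identify the complexified controllability matrix
  intro h0
  apply hC
  have hm := (RingHom.map_det f (ctrbMat A (fun i => (Dh • B - K * Bh) i 0)))
  rw [RingHom.mapMatrix_apply, ctrbMat_map] at hm
  rw [← hm, h0, map_zero]
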